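/- Let m > 1 and 2 ≤ N ≤ m, and assume (H1). Let u₁, u₂ be two radial solutions with b < α₁ < α₂; on (0,α₁) set t(u) = r₁(u) − r₂(u), ω_i(u) = r_i(u)^{N−1}/(r_i'(u)|r_i'(u)|^{m−2}), S(u) = ω₁(u)/ω₂(u), and for a ∈ ℝ set P_i(u) = a u ω_i(u) + r_i(u)^N ( (m−1)/m · 1/|r_i'(u)|^m + (a/N) u f(u) ). If u_c ∈ (b,α₁) satisfies t(u_c) > 0 and t'(u_c) = 0, then for every a > 0: P₁(u_c) − S(u_c) P₂(u_c) > 0. -/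

import Mathlib

open Filter Set MeasureTheory intervalIntegral

noncomputable section

/-- The half-open interval `[0, R)` inside `ℝ`, where `R : EReal` may be `∞`. -/
def domR (R : EReal) : Set ℝ := {r : ℝ | 0 ≤ r ∧ (r : EReal) < R}

/-- The filter describing `r → R⁻` inside `ℝ` (it equals `atTop` when `R = ∞`). -/
def limR (R : EReal) : Filter ℝ := Filter.comap Real.toEReal (nhdsWithin R (Set.Iio R))

/-- Assumption (H1): `f` is continuous on `(0,∞)`, nonpositive on `(0,b]` and
positive on `(b,∞)`, with `b > 0`. -/
def H1cond (b : ℝ) (f : ℝ → ℝ) : Prop :=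
  0 < b ∧ ContinuousOn f (Set.Ioi 0) ∧
    (∀ u : ℝ, 0 < u → u ≤ b → f u ≤ 0) ∧ (∀ u : ℝ, b < u → 0 < f u)

/-- `u` (with derivative `u'`) is a radial solution on `[0, R)` of
`(r^{N-1} |u'|^{m-2} u')' = - r^{N-1} f(u)`, positive, `C¹` up to the origin,
with `u'(0) = 0` and `u, u' → 0` as `r → R`. -/
def IsRadialSolution (N : ℕ) (m : ℝ) (f : ℝ → ℝ) (R : EReal) (u u' : ℝ → ℝ) : Prop :=
  0 < R ∧
  (∀ r ∈ domR R, HasDerivWithinAt u (u' r) (domR R) r) ∧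
  ContinuousOn u' (domR R) ∧
  (∀ r ∈ domR R, 0 < u r) ∧
  u' 0 = 0 ∧
  (∀ r : ℝ, 0 < r → (r : EReal) < R →
    HasDerivAt (fun s : ℝ => s ^ (N - 1) * |u' s| ^ (m - 2) * u' s)
      (-(r ^ (N - 1) * f (u r))) r) ∧
  Filter.Tendsto u (limR R) (nhds 0) ∧
  Filter.Tendsto u' (limR R) (nhds 0)

/-- `rr` is the (strictly decreasing) inverse on `(0, α)` of a radial solution `u`,
with derivatives `rr'`, `rr''`, satisfying the transformed ODE
`(m-1) r'' = (N-1) r'²/r + f(u) |r'|^m r'`. -/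
def IsInvSol (N : ℕ) (m α : ℝ) (f : ℝ → ℝ) (R : EReal) (u rr rr' rr'' : ℝ → ℝ) : Prop :=
  (∀ v ∈ Set.Ioo 0 α,
    0 < rr v ∧ (rr v : EReal) < R ∧ u (rr v) = v ∧
    HasDerivAt rr (rr' v) v ∧ rr' v < 0 ∧ HasDerivAt rr' (rr'' v) v ∧
    (m - 1) * rr'' v = ((N : ℝ) - 1) * (rr' v) ^ 2 / rr v + f v * |rr' v| ^ m * rr' v) ∧
  (∀ x : ℝ, 0 < x → (x : EReal) < R → ∃ v ∈ Set.Ioo 0 α, rr v = x)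

/-- The function `ω(u) = r(u)^{N-1} / (r'(u) |r'(u)|^{m-2})`. -/
def omegaF (N : ℕ) (m : ℝ) (rr rr' : ℝ → ℝ) (v : ℝ) : ℝ :=
  rr v ^ (N - 1) / (rr' v * |rr' v| ^ (m - 2))

/-- The function `P(u) = a u ω(u) + r(u)^N ((m-1)/m · 1/|r'(u)|^m + (a/N) u f(u))`. -/
def PF (N : ℕ) (m a : ℝ) (f rr rr' : ℝ → ℝ) (v : ℝ) : ℝ :=
  a * v * omegaF N m rr rr' v +
    rr v ^ N * ((m - 1) / m * (1 / |rr' v| ^ m) + a / (N : ℝ) * v * f v)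


/-- if `u_c ∈ (b, α₁)` satisfies `t(u_c) > 0` and `t'(u_c) = 0`, then for
every `a > 0`, `P₁(u_c) - S(u_c) P₂(u_c) > 0`. -/
theorem stmt19 (N : ℕ) (m b : ℝ) (f : ℝ → ℝ) (hm : 1 < m)
    (hN2 : 2 ≤ N) (hNm : (N : ℝ) ≤ m) (hf : H1cond b f)
    (R₁ R₂ : EReal) (u₁ u₁' u₂ u₂' r₁ r₁' r₁'' r₂ r₂' r₂'' : ℝ → ℝ)
    (h₁ : IsRadialSolution N m f R₁ u₁ u₁')
    (h₂ : IsRadialSolution N m f R₂ u₂ u₂')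
    (hb : b < u₁ 0) (h12 : u₁ 0 < u₂ 0)
    (hi₁ : IsInvSol N m (u₁ 0) f R₁ u₁ r₁ r₁' r₁'')
    (hi₂ : IsInvSol N m (u₂ 0) f R₂ u₂ r₂ r₂' r₂'')
    (uc : ℝ) (huc1 : b < uc) (huc2 : uc < u₁ 0)
    (ht : 0 < r₁ uc - r₂ uc) (ht' : r₁' uc - r₂' uc = 0) :
    ∀ a : ℝ, 0 < a →
      0 < PF N m a f r₁ r₁' uc -
        (omegaF N m r₁ r₁' uc / omegaF N m r₂ r₂' uc) * PF N m a f r₂ r₂' uc := by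
  intro a ha
  obtain ⟨hb0, hfc, hfneg, hfpos⟩ := hf
  have huc0 : 0 < uc := hb0.trans huc1
  obtain ⟨h1r, -, -, -, h1n, -, -⟩ := hi₁.1 uc ⟨huc0, huc2⟩
  obtain ⟨h2r, -, -, -, h2n, -, -⟩ := hi₂.1 uc ⟨huc0, huc2.trans h12⟩
  have hp : r₂' uc = r₁' uc := by linarith
  have hpne : r₁' uc ≠ 0 := ne_of_lt h1n
  have habs : (0:ℝ) < |r₁' uc| := abs_pos.mpr hpne
  have hD : r₁' uc * |r₁' uc| ^ (m - 2) ≠ 0 :=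
    mul_ne_zero hpne (ne_of_gt (Real.rpow_pos_of_pos habs _))
  have hfuc : 0 < f uc := hfpos uc huc1
  have hNpos : (0:ℝ) < (N:ℝ) := by
    have : (0:ℕ) < N := by omega
    exact_mod_cast this
  have hC : 0 < (m - 1) / m * (1 / |r₁' uc| ^ m) + a / (N : ℝ) * uc * f uc := by
    have h1 : 0 < |r₁' uc| ^ m := Real.rpow_pos_of_pos habs m
    have h2 : 0 < (m - 1) / m * (1 / |r₁' uc| ^ m) :=
      mul_pos (div_pos (by linarith) (by linarith)) (by positivity)
    have h3 : 0 < a / (N : ℝ) * uc * f uc := by positivity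
    linarith
  have hBpow : (r₂ uc) ^ (N - 1) ≠ 0 := pow_ne_zero _ (ne_of_gt h2r)
  have hApow : 0 < (r₁ uc) ^ (N - 1) := pow_pos h1r _
  have hN1 : N - 1 + 1 = N := Nat.sub_add_cancel (by omega : 1 ≤ N)
  have key : PF N m a f r₁ r₁' uc -
      (omegaF N m r₁ r₁' uc / omegaF N m r₂ r₂' uc) * PF N m a f r₂ r₂' uc =
      (r₁ uc) ^ (N - 1) * (r₁ uc - r₂ uc) *
        ((m - 1) / m * (1 / |r₁' uc| ^ m) + a / (N : ℝ) * uc * f uc) := by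
    simp only [PF, omegaF, hp]
    rw [← hN1, pow_succ (r₁ uc), pow_succ (r₂ uc)]
    field_simp
    simp only [add_tsub_cancel_left, add_tsub_cancel_right]
    ring
  rw [key]
  exact mul_pos (mul_pos hApow ht) hC

end
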